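/- arXiv:2209.05709 — 2 statements merged into one kernel-verified Lean document; each statement's English description precedes it below -/
import Mathlib

section
/- (Lemma 1) Under the assumption that there exist γ̄ > 0 and a target head classifier k̄ with R̂_{T,γ̄}(w*, k̄) ≤ R̂_T(w*, f_mp∘h*), for any γ ∈ [0, γ̄], the empirical margin risk of the optimal transferred head classifier k* satisfies R̂_{T,γ}(w*, k*) ≤ R̂_S(w*, h*) + 1 − MPA(T|S). -/
open Finset

/-- The empirical margin risk R̂_{T,γ}(w,k), with `f i = k (w (x i))` the score vector. -/
noncomputable def marginRisk {n mT : ℕ} (t : Fin n → Fin mT) (f : Fin n → Fin mT → ℝ)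
    (γ : ℝ) : ℝ :=
  (n : ℝ)⁻¹ * ∑ i : Fin n,
    if h : ((Finset.univ : Finset (Fin mT)).erase (t i)).Nonempty then
      (if f i (t i) < γ + (((Finset.univ : Finset (Fin mT)).erase (t i)).sup' h (f i))
        then (1 : ℝ) else 0)
    else 0

/-- Lemma 1: under Assumption 1, for any γ ∈ [0, γ̄],
R̂_{T,γ}(w*, k*) ≤ R̂_S(w*, h*) + 1 − MPA(T|S). -/
theorem lemma1 {X F : Type*} {n mS mT : ℕ} (hn : 0 < n)
    (x : Fin n → X) (s : Fin n → Fin mS) (t : Fin n → Fin mT)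
    (wstar : X → F) (hstar : F → Fin mS)
    -- f_mp is the majority predictor built from (s_i, t_i):
    (fmp : Fin mS → Fin mT)
    (hfmp : ∀ a b, ((Finset.univ.filter (fun i => s i = a ∧ t i = b)).card : ℝ)
      ≤ ((Finset.univ.filter (fun i => s i = a ∧ t i = fmp a)).card : ℝ))
    -- the class of target head classifiers:
    (Ωk : Set (F → Fin mT → ℝ))
    -- Assumption 1: ∃ γ̄ > 0 and k̄ ∈ Ω_k with R̂_{T,γ̄}(w*,k̄) ≤ R̂_T(w*, f_mp ∘ h*):
    (γbar : ℝ) (hγbar : 0 < γbar) (kbar : F → Fin mT → ℝ) (hkbar : kbar ∈ Ωk)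
    (hassm : marginRisk t (fun i => kbar (wstar (x i))) γbar
      ≤ (n : ℝ)⁻¹ * ∑ i : Fin n,
          (if t i ≠ fmp (hstar (wstar (x i))) then (1 : ℝ) else 0))
    -- the margin and the optimal transferred head classifier k* at margin γ:
    (γ : ℝ) (hγ0 : 0 ≤ γ) (hγ : γ ≤ γbar)
    (kstar : F → Fin mT → ℝ) (hkstar : kstar ∈ Ωk)
    (hmin : ∀ k ∈ Ωk, marginRisk t (fun i => kstar (wstar (x i))) γ
      ≤ marginRisk t (fun i => k (wstar (x i))) γ) :
    marginRisk t (fun i => kstar (wstar (x i))) γ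
      ≤ (n : ℝ)⁻¹ * ∑ i : Fin n, (if s i ≠ hstar (wstar (x i)) then (1 : ℝ) else 0)
        + 1 - (n : ℝ)⁻¹ * ∑ i : Fin n, (if t i = fmp (s i) then (1 : ℝ) else 0) := by
  have hninv : (0:ℝ) ≤ (n:ℝ)⁻¹ := by positivity
  have hmono : marginRisk t (fun i => kbar (wstar (x i))) γ
      ≤ marginRisk t (fun i => kbar (wstar (x i))) γbar := by
    unfold marginRisk
    apply mul_le_mul_of_nonneg_left _ hninv
    apply Finset.sum_le_sum
    intro i _
    by_cases h : ((Finset.univ : Finset (Fin mT)).erase (t i)).Nonempty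
    · simp only [dif_pos h]
      split_ifs with h1 h2 <;> try norm_num
      exact h2 (lt_of_lt_of_le h1 (by linarith))
    · simp only [dif_neg h]; exact le_refl 0
  have hlast : (n : ℝ)⁻¹ * ∑ i : Fin n,
        (if t i ≠ fmp (hstar (wstar (x i))) then (1 : ℝ) else 0)
      ≤ (n : ℝ)⁻¹ * ∑ i : Fin n, (if s i ≠ hstar (wstar (x i)) then (1 : ℝ) else 0)
        + 1 - (n : ℝ)⁻¹ * ∑ i : Fin n, (if t i = fmp (s i) then (1 : ℝ) else 0) := by
    have key : ∀ i : Fin n, (if t i ≠ fmp (hstar (wstar (x i))) then (1:ℝ) else 0)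
        ≤ (if s i ≠ hstar (wstar (x i)) then (1:ℝ) else 0) + 1
          - (if t i = fmp (s i) then (1:ℝ) else 0) := by
      intro i
      by_cases hs : s i = hstar (wstar (x i))
      · rw [← hs]
        split_ifs <;> simp_all <;> norm_num
      · split_ifs <;> simp_all <;> norm_num
    have hsum : ∑ i : Fin n, (if t i ≠ fmp (hstar (wstar (x i))) then (1:ℝ) else 0)
        ≤ ∑ i : Fin n, ((if s i ≠ hstar (wstar (x i)) then (1:ℝ) else 0) + 1
          - (if t i = fmp (s i) then (1:ℝ) else 0)) :=
      Finset.sum_le_sum fun i _ => key i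
    have hn1 : (n:ℝ)⁻¹ * (n:ℝ) = 1 := by
      field_simp
    calc (n : ℝ)⁻¹ * ∑ i : Fin n, (if t i ≠ fmp (hstar (wstar (x i))) then (1:ℝ) else 0)
        ≤ (n : ℝ)⁻¹ * ∑ i : Fin n, ((if s i ≠ hstar (wstar (x i)) then (1:ℝ) else 0) + 1
          - (if t i = fmp (s i) then (1:ℝ) else 0)) :=
          mul_le_mul_of_nonneg_left hsum hninv
      _ = (n : ℝ)⁻¹ * ∑ i : Fin n, (if s i ≠ hstar (wstar (x i)) then (1:ℝ) else 0)
          + (n:ℝ)⁻¹ * (n:ℝ)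
          - (n : ℝ)⁻¹ * ∑ i : Fin n, (if t i = fmp (s i) then (1:ℝ) else 0) := by
          rw [Finset.sum_sub_distrib, Finset.sum_add_distrib, Finset.sum_const,
            Finset.card_univ, Fintype.card_fin]
          push_cast
          ring
      _ = _ := by rw [hn1]
  calc marginRisk t (fun i => kstar (wstar (x i))) γ
      ≤ marginRisk t (fun i => kbar (wstar (x i))) γ := hmin kbar hkbar
    _ ≤ marginRisk t (fun i => kbar (wstar (x i))) γbar := hmono
    _ ≤ _ := hassm
    _ ≤ _ := hlast
end

section
/- If R̂_S(w*,h*) = 0 (the source model fits the source data perfectly), then under Assumption 1 and for γ ∈ [0,γ̄], R̂_{T,γ}(w*,k*) ≤ 1 − MPA(T|S). -/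
open Finset

lemma marginRisk_mono {n mT : ℕ} (t : Fin n → Fin mT) (f : Fin n → Fin mT → ℝ)
    {γ γ' : ℝ} (h : γ ≤ γ') : marginRisk t f γ ≤ marginRisk t f γ' := by
  unfold marginRisk
  apply mul_le_mul_of_nonneg_left _ (by positivity)
  apply Finset.sum_le_sum
  intro i _
  split
  · split_ifs with h1 h2 <;> linarith
  · exact le_rfl

/-- if R̂_S(w*,h*) = 0, then under Assumption 1 and γ ∈ [0,γ̄],
R̂_{T,γ}(w*,k*) ≤ 1 − MPA(T|S). -/
theorem lemma1_perfect_source {X F : Type*} {n mS mT : ℕ} (hn : 0 < n)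
    (x : Fin n → X) (s : Fin n → Fin mS) (t : Fin n → Fin mT)
    (wstar : X → F) (hstar : F → Fin mS)
    (hRS : (n : ℝ)⁻¹ * ∑ i : Fin n,
      (if s i ≠ hstar (wstar (x i)) then (1 : ℝ) else 0) = 0)
    (fmp : Fin mS → Fin mT)
    (hfmp : ∀ a b, ((Finset.univ.filter (fun i => s i = a ∧ t i = b)).card : ℝ)
      ≤ ((Finset.univ.filter (fun i => s i = a ∧ t i = fmp a)).card : ℝ))
    (Ωk : Set (F → Fin mT → ℝ))
    (γbar : ℝ) (hγbar : 0 < γbar) (kbar : F → Fin mT → ℝ) (hkbar : kbar ∈ Ωk)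
    (hassm : marginRisk t (fun i => kbar (wstar (x i))) γbar
      ≤ (n : ℝ)⁻¹ * ∑ i : Fin n,
          (if t i ≠ fmp (hstar (wstar (x i))) then (1 : ℝ) else 0))
    (γ : ℝ) (hγ0 : 0 ≤ γ) (hγ : γ ≤ γbar)
    (kstar : F → Fin mT → ℝ) (hkstar : kstar ∈ Ωk)
    (hmin : ∀ k ∈ Ωk, marginRisk t (fun i => kstar (wstar (x i))) γ
      ≤ marginRisk t (fun i => k (wstar (x i))) γ) :
    marginRisk t (fun i => kstar (wstar (x i))) γ
      ≤ 1 - (n : ℝ)⁻¹ * ∑ i : Fin n, (if t i = fmp (s i) then (1 : ℝ) else 0) := by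
  -- from hRS: s i = hstar (wstar (x i)) for all i
  have hs : ∀ i, s i = hstar (wstar (x i)) := by
    have hnpos : (0:ℝ) < (n:ℝ)⁻¹ := by positivity
    have hsum : (∑ i : Fin n, (if s i ≠ hstar (wstar (x i)) then (1 : ℝ) else 0)) = 0 := by
      rcases mul_eq_zero.1 hRS with h | h
      · exact absurd h (ne_of_gt hnpos)
      · exact h
    intro i
    by_contra hne
    have hterm : ∀ j ∈ (univ : Finset (Fin n)),
        (0:ℝ) ≤ (if s j ≠ hstar (wstar (x j)) then (1 : ℝ) else 0) := by
      intro j _; split <;> norm_num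
    have := (Finset.sum_eq_zero_iff_of_nonneg hterm).1 hsum i (mem_univ i)
    simp [hne] at this
  calc marginRisk t (fun i => kstar (wstar (x i))) γ
      ≤ marginRisk t (fun i => kbar (wstar (x i))) γ := hmin kbar hkbar
    _ ≤ marginRisk t (fun i => kbar (wstar (x i))) γbar := marginRisk_mono _ _ hγ
    _ ≤ (n : ℝ)⁻¹ * ∑ i : Fin n, (if t i ≠ fmp (hstar (wstar (x i))) then (1 : ℝ) else 0) := hassm
    _ = 1 - (n : ℝ)⁻¹ * ∑ i : Fin n, (if t i = fmp (s i) then (1 : ℝ) else 0) := by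
        have : ∀ i : Fin n, (if t i ≠ fmp (hstar (wstar (x i))) then (1 : ℝ) else 0)
            = 1 - (if t i = fmp (s i) then (1 : ℝ) else 0) := by
          intro i; rw [← hs i]; by_cases h : t i = fmp (s i) <;> simp [h]
        rw [Finset.sum_congr rfl (fun i _ => this i), Finset.sum_sub_distrib, mul_sub]
        simp [Finset.card_univ, mul_comm, hn.ne']
end
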